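/- For each a,b ∈ ℕ∪{0} and c ≥ 2 there is a ℤ₂-equivariant homeomorphism 𝕋^{a,b,c} ≃ 𝕋^{a+c−1,b,1}. Explicitly, identifying 𝕋^d with U(1)^d, the map f_c(z₁,…,z_{d−c+1},…,z_{d−1},z_d) := (z₁,…,z_{d−c+1}z_d,…,z_{d−1}z_d, z_d) (multiplying each of the last c−1 antipodal coordinates except the final one by z_d) is a homeomorphism intertwining the product involutions, where S^{2,0} corresponds to U(1) with involution z ↦ z and S^{0,2} corresponds to U(1) with involution z ↦ −z. -/

import Mathlib

/-!
STATEMENT 18: For a,b ∈ ℕ and c ≥ 2 there is a ℤ₂-equivariant homeomorphism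
𝕋^{a,b,c} ≃ 𝕋^{a+c−1,b,1}.  Identifying 𝕋^d with U(1)^d, an explicit such map is
f_c(z₁,…,z_{d−c+1},…,z_{d−1},z_d) = (z₁,…,z_{d−c+1}z_d,…,z_{d−1}z_d,z_d),
multiplying each of the last c−1 antipodal coordinates except the final one by the
final coordinate; since (−z_i)(−z_d) = z_i z_d, these products become coordinates of
trivial-involution type.  Here S^{2,0} is U(1) with trivial involution, S^{1,1} is
U(1) with conjugation, S^{0,2} is U(1) with the antipodal involution, and
𝕋^{a,b,c} = (S^{2,0})^a × (S^{1,1})^b × (S^{0,2})^c carries the product involution.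
The homeomorphism below fixes the S^{1,1} block and the final antipodal coordinate,
as f_c does.
-/

/-- The circle S¹ = U(1) ⊂ ℂ. -/
noncomputable abbrev C1 : Type := Metric.sphere (0 : ℂ) 1

/-- Complex conjugation on the circle (the involution of S^{1,1}). -/
noncomputable def conjC1 : C1 → C1 := fun z =>
  ⟨(starRingEnd ℂ) (z : ℂ), by
    have hz := z.2
    simp only [Metric.mem_sphere, dist_zero_right] at hz ⊢
    simpa using hz⟩

/-- The involutive torus 𝕋^{a,b,c} = (S^{2,0})^a × (S^{1,1})^b × (S^{0,2})^c. -/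
noncomputable abbrev Torus (a b c : ℕ) : Type :=
  (Fin a → C1) × (Fin b → C1) × (Fin c → C1)

/-- The product involution: trivial, conjugation, antipodal on the three blocks. -/
noncomputable def torusInv (a b c : ℕ) : Torus a b c → Torus a b c := fun p =>
  (p.1, fun i => conjC1 (p.2.1 i), fun i => -(p.2.2 i))

section aux

variable (a b c : ℕ) (hc : 2 ≤ c)

theorem fkmm_lt (c : ℕ) (hc : 2 ≤ c) : c - 1 < c := by omega

/-- Forward map f_c. -/
noncomputable def fkmmF : Torus a b c → Torus (a + c - 1) b 1 := fun p =>
  (fun i => if h : (i : ℕ) < a then p.1 ⟨i, h⟩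
    else p.2.2 ⟨(i : ℕ) - a, by omega⟩ * p.2.2 ⟨c - 1, fkmm_lt c hc⟩,
   p.2.1,
   fun _ => p.2.2 ⟨c - 1, fkmm_lt c hc⟩)

/-- Inverse map. -/
noncomputable def fkmmG : Torus (a + c - 1) b 1 → Torus a b c := fun q =>
  (fun i => q.1 ⟨i, by omega⟩,
   q.2.1,
   fun j => if h : (j : ℕ) < c - 1 then q.1 ⟨a + (j : ℕ), by omega⟩ * (q.2.2 0)⁻¹
    else q.2.2 0)

end aux

theorem fkmm_stmt18 (a b c : ℕ) (hc : 2 ≤ c) :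
    ∃ e : Torus a b c ≃ₜ Torus (a + c - 1) b 1,
      -- e intertwines the two involutions (ℤ₂-equivariance) …
      (∀ p, e (torusInv a b c p) = torusInv (a + c - 1) b 1 (e p)) ∧
      -- … and, like the explicit map f_c, it fixes the S^{1,1} block and keeps the
      -- final antipodal coordinate
      (∀ p : Torus a b c, (e p).2.1 = p.2.1) ∧
      (∀ p : Torus a b c, (e p).2.2 = fun _ => p.2.2 ⟨c - 1, by omega⟩) := by
  refine ⟨⟨⟨fkmmF a b c hc, fkmmG a b c hc, ?_, ?_⟩, ?_, ?_⟩, ?_, ?_, ?_⟩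
  · -- left inverse
    intro p
    refine Prod.ext (funext fun i => ?_) (Prod.ext rfl (funext fun j => ?_))
    · simp only [fkmmF, fkmmG]
      rw [dif_pos i.2]
    · simp only [fkmmF, fkmmG]
      by_cases h : (j : ℕ) < c - 1
      · rw [dif_pos h, dif_neg (show ¬((⟨a + (j : ℕ), by omega⟩ : Fin (a + c - 1)) : ℕ) < a by
          simp only [Fin.val_mk]; omega)]
        have h1 : (⟨((⟨a + (j : ℕ), by omega⟩ : Fin (a + c - 1)) : ℕ) - a, by
            simp only [Fin.val_mk]; omega⟩ : Fin c) = j := by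
          apply Fin.ext
          simp only [Fin.val_mk]
          omega
        rw [h1, mul_inv_cancel_right]
      · rw [dif_neg h]
        have h2 : (⟨c - 1, by omega⟩ : Fin c) = j := by
          have hj := j.2
          apply Fin.ext
          simp only [Fin.val_mk]
          omega
        rw [h2]
  · -- right inverse
    intro q
    refine Prod.ext (funext fun i => ?_) (Prod.ext rfl (funext fun j => ?_))
    · simp only [fkmmF, fkmmG]
      by_cases h : (i : ℕ) < a
      · rw [dif_pos h]
      · rw [dif_neg h, dif_pos (show ((⟨(i : ℕ) - a, by omega⟩ : Fin c) : ℕ) < c - 1 by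
          simp only [Fin.val_mk]; omega),
          dif_neg (show ¬((⟨c - 1, by omega⟩ : Fin c) : ℕ) < c - 1 by
          simp only [Fin.val_mk]; omega)]
        have h1 : (⟨a + ((⟨(i : ℕ) - a, by omega⟩ : Fin c) : ℕ), by
            simp only [Fin.val_mk]; omega⟩ : Fin (a + c - 1)) = i := by
          apply Fin.ext
          simp only [Fin.val_mk]
          omega
        rw [h1, inv_mul_cancel_right]
    · simp only [fkmmF, fkmmG]
      rw [dif_neg (show ¬((⟨c - 1, by omega⟩ : Fin c) : ℕ) < c - 1 by
          simp only [Fin.val_mk]; omega)]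
      exact congrArg q.2.2 (Subsingleton.elim _ _)
  · -- continuity of fkmmF
    refine continuous_prodMk.2 ⟨?_, continuous_prodMk.2 ⟨?_, ?_⟩⟩
    · refine continuous_pi fun i => ?_
      by_cases h : (i : ℕ) < a
      · simp only [fkmmF, dif_pos h]
        exact (continuous_apply _).comp continuous_fst
      · simp only [fkmmF, dif_neg h]
        exact (((continuous_apply _).comp (continuous_snd.comp continuous_snd)).mul
          ((continuous_apply _).comp (continuous_snd.comp continuous_snd)))
    · exact continuous_fst.comp continuous_snd
    · exact continuous_pi fun _ =>
        (continuous_apply _).comp (continuous_snd.comp continuous_snd)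
  · -- continuity of fkmmG
    refine continuous_prodMk.2 ⟨?_, continuous_prodMk.2 ⟨?_, ?_⟩⟩
    · exact continuous_pi fun i => (continuous_apply _).comp continuous_fst
    · exact continuous_fst.comp continuous_snd
    · refine continuous_pi fun j => ?_
      by_cases h : (j : ℕ) < c - 1
      · simp only [fkmmG, dif_pos h]
        exact ((continuous_apply _).comp continuous_fst).mul
          (((continuous_apply _).comp (continuous_snd.comp continuous_snd)).inv)
      · simp only [fkmmG, dif_neg h]
        exact (continuous_apply _).comp (continuous_snd.comp continuous_snd)
  · -- equivariance
    intro p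
    show fkmmF a b c hc (torusInv a b c p)
        = torusInv (a + c - 1) b 1 (fkmmF a b c hc p)
    refine Prod.ext (funext fun i => ?_) (Prod.ext rfl (funext fun j => ?_))
    · simp only [fkmmF, torusInv]
      by_cases h : (i : ℕ) < a
      · rw [dif_pos h, dif_pos h]
      · rw [dif_neg h, dif_neg h]
        ext
        simp [Submonoid.coe_mul]
    · rfl
  · intro p; rfl
  · intro p; rfl
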